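/- Any algorithm that computes an ε-approximate symmetric Bayes–Nash equilibrium (that is continuous, strictly increasing, and no-overbidding) of a two-bidder first-price auction with continuous bids in [0,1], given only oracle access to the value cdf, must make at least Ω(1/ε) cdf queries. Concretely, if the algorithm makes k queries then k ≥ (1/45)(1/ε) − 6/5. -/

import Mathlib

open Set Function

set_option maxHeartbeats 2000000

/-- Query lower bound for the two-bidder CCFPA. Any (deterministic) algorithm
that makes k cdf queries (at points X 0, …, X (k-1)) and outputs a continuous, strictly
increasing, no-overbidding strategy β that is an ε-BNE with respect to *every* continuous,
strictly increasing cdf F consistent with the answers F(Xᵢ) = Xᵢ, must satisfy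
k ≥ (1/45)(1/ε) − 6/5. -/
theorem query_lower_bound (ε : ℝ) (hε : 0 < ε) (k : ℕ) (X : Fin k → ℝ)
    (hX : ∀ i, X i ∈ Set.Icc (0:ℝ) 1)
    (β : ℝ → ℝ)
    (hβc : ContinuousOn β (Set.Icc 0 1)) (hβm : StrictMonoOn β (Set.Icc 0 1))
    (hβrange : ∀ v ∈ Set.Icc (0:ℝ) 1, β v ∈ Set.Icc (0:ℝ) 1)
    (hno : ∀ v ∈ Set.Icc (0:ℝ) 1, β v ≤ v)
    (hcorrect : ∀ F : ℝ → ℝ, ContinuousOn F (Set.Icc 0 1) → StrictMonoOn F (Set.Icc 0 1) →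
      F 0 = 0 → F 1 = 1 → (∀ i, F (X i) = X i) →
      -- β is an ε-BNE with respect to F, with utility u(b;v) = (v-b)·F(β⁻¹(b)):
      ∀ v ∈ Set.Icc (0:ℝ) 1, ∀ b ∈ Set.Icc (0:ℝ) 1,
        (v - b) * F (Function.invFunOn β (Set.Icc 0 1) b) ≤ (v - β v) * F v + ε) :
    (1 / 45) * (1 / ε) - 6 / 5 ≤ (k : ℝ) := by
  -- trivial case: large ε
  by_cases htriv : (1:ℝ) / 45 * (1 / ε) - 6 / 5 ≤ 0
  · exact le_trans htriv (Nat.cast_nonneg k)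
  push_neg at htriv
  have hε54 : ε < 1 / 54 := by
    by_contra hcon
    push_neg at hcon
    have h1ε : 1 / ε ≤ 54 := by
      rw [div_le_iff₀ hε]; linarith
    linarith
  -- the inverse-function identity
  have hinv : ∀ a ∈ Set.Icc (0:ℝ) 1, Function.invFunOn β (Set.Icc 0 1) (β a) = a :=
    fun a ha => (hβm.injOn).leftInvOn_invFunOn ha
  -- set up the scale
  set D : ℝ := 3 * ((k : ℝ) + 1) with hD_def
  have hD : 0 < D := by positivity
  set w : ℝ := 1 / D with hw_def
  have hw : 0 < w := by rw [hw_def]; positivity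
  have hDw : D * w = 1 := by rw [hw_def]; field_simp
  -- pigeonhole: find an unqueried interval
  obtain ⟨j, hj⟩ : ∃ j : Fin (k+1), ∀ i : Fin k,
      (⟨min k ⌊D * (X i - 2/3)⌋₊, Nat.lt_succ_of_le (min_le_left _ _)⟩ : Fin (k+1)) ≠ j := by
    by_contra hcon
    push_neg at hcon
    have hsurj : Function.Surjective (fun i : Fin k =>
        (⟨min k ⌊D * (X i - 2/3)⌋₊, Nat.lt_succ_of_le (min_le_left _ _)⟩ : Fin (k+1))) :=
      fun j => hcon j
    have hcard := Fintype.card_le_of_surjective _ hsurj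
    simp only [Fintype.card_fin] at hcard
    omega
  have hjk : (j.1 : ℝ) ≤ (k : ℝ) := by
    exact_mod_cast Nat.lt_succ_iff.mp j.isLt
  set c : ℝ := 2/3 + (j.1 : ℝ) * w with hc_def
  set d : ℝ := c + w with hd_def
  set c' : ℝ := c + w / 100 with hc'_def
  clear_value c' d c w D
  have hc23 : (2:ℝ)/3 ≤ c := by
    rw [hc_def]
    nlinarith [mul_nonneg (Nat.cast_nonneg j.1 : (0:ℝ) ≤ (j.1:ℝ)) hw.le]
  have hkw : ((k:ℝ) + 1) * w = 1/3 := by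
    rw [hw_def, hD_def]; field_simp
  have hd1 : d ≤ 1 := by
    rw [hd_def, hc_def]
    nlinarith [mul_le_mul_of_nonneg_right (show (j.1:ℝ) + 1 ≤ (k:ℝ) + 1 by linarith) hw.le]
  -- the unqueried interval
  have hgap : ∀ i, X i ≤ c ∨ d ≤ X i := by
    intro i
    by_contra hcon
    push_neg at hcon
    obtain ⟨h1, h2⟩ := hcon
    have h1' : (j.1 : ℝ) * w < X i - 2/3 := by rw [hc_def] at h1; linarith
    have h2' : X i - 2/3 < ((j.1 : ℝ) + 1) * w := by
      rw [hd_def, hc_def] at h2; linarith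
    have hx1 : (j.1 : ℝ) < D * (X i - 2/3) := by
      have := mul_lt_mul_of_pos_left h1' hD
      calc (j.1 : ℝ) = D * w * (j.1 : ℝ) := by rw [hDw]; ring
        _ = D * ((j.1:ℝ) * w) := by ring
        _ < D * (X i - 2/3) := this
    have hx2 : D * (X i - 2/3) < (j.1 : ℝ) + 1 := by
      have := mul_lt_mul_of_pos_left h2' hD
      calc D * (X i - 2/3) < D * (((j.1:ℝ) + 1) * w) := this
        _ = D * w * ((j.1:ℝ) + 1) := by ring
        _ = (j.1 : ℝ) + 1 := by rw [hDw]; ring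
    have hv0 : 0 ≤ D * (X i - 2/3) := le_trans (Nat.cast_nonneg j.1) hx1.le
    have hfl : ⌊D * (X i - 2/3)⌋₊ = j.1 := by
      rw [Nat.floor_eq_iff hv0]
      exact ⟨hx1.le, hx2⟩
    apply hj i
    apply Fin.ext
    simp only [hfl]
    exact min_eq_right (Nat.lt_succ_iff.mp j.isLt)
  -- basic facts
  have hc'23 : (2:ℝ)/3 ≤ c' := by rw [hc'_def]; linarith
  have hc'd : c' < d := by rw [hc'_def, hd_def]; linarith
  have hc'1 : c' ≤ 1 := le_trans hc'd.le hd1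
  have hd0 : (0:ℝ) ≤ d := by rw [hd_def]; linarith
  have hd_mem : d ∈ Set.Icc (0:ℝ) 1 := ⟨hd0, hd1⟩
  have hc'_mem : c' ∈ Set.Icc (0:ℝ) 1 := ⟨by linarith, hc'1⟩
  have hmid_mem : c' / 2 ∈ Set.Icc (0:ℝ) 1 := ⟨by linarith, by linarith⟩
  -- the identity cdf
  have hidmono : StrictMonoOn (fun x : ℝ => x) (Set.Icc 0 1) := fun a _ b _ h => h
  have hid := hcorrect (fun x => x) continuousOn_id hidmono rfl rfl (fun i => rfl)
  have hII := hid c' hc'_mem (β d) (hβrange d hd_mem)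
  rw [hinv d hd_mem] at hII
  have hIII := hid c' hc'_mem (β (c'/2)) (hβrange _ hmid_mem)
  rw [hinv _ hmid_mem] at hIII
  -- the perturbed cdf
  have hs1 : (1:ℝ) ≤ 100 * (1 - ε) := by linarith
  have hs2b : (100/99) * ε ≤ 1 := by linarith
  set Fh : ℝ → ℝ := fun x =>
    max x (min (c + 100 * (1 - ε) * (x - c)) (d + (100/99) * ε * (x - d))) with hFh_def
  clear_value Fh
  have hFhmono : StrictMono Fh := by
    intro a b hab
    simp only [hFh_def]
    refine max_lt_max hab (min_lt_min ?_ ?_)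
    · nlinarith [mul_pos (show (0:ℝ) < 100 * (1 - ε) by linarith) (sub_pos.2 hab)]
    · nlinarith [mul_pos (show (0:ℝ) < (100/99) * ε by positivity) (sub_pos.2 hab)]
  have hFhcont : Continuous Fh := by
    rw [hFh_def]
    fun_prop
  have hFh0 : Fh 0 = 0 := by
    simp only [hFh_def]
    have h1 : c + 100 * (1 - ε) * (0 - c) ≤ 0 := by
      nlinarith [mul_nonneg (sub_nonneg.2 hs1) (show (0:ℝ) ≤ c by linarith)]
    exact max_eq_left (le_trans (min_le_left _ _) h1)
  have hFh1 : Fh 1 = 1 := by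
    simp only [hFh_def]
    have h1 : d + (100/99) * ε * (1 - d) ≤ 1 := by
      nlinarith [mul_nonneg (sub_nonneg.2 hs2b) (sub_nonneg.2 hd1)]
    exact max_eq_left (le_trans (min_le_right _ _) h1)
  have hFhX : ∀ i, Fh (X i) = X i := by
    intro i
    simp only [hFh_def]
    rcases hgap i with hxc | hdx
    · have h1 : c + 100 * (1 - ε) * (X i - c) ≤ X i := by
        nlinarith [mul_nonneg (sub_nonneg.2 hs1) (sub_nonneg.2 hxc)]
      exact max_eq_left (le_trans (min_le_left _ _) h1)
    · have h1 : d + (100/99) * ε * (X i - d) ≤ X i := by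
        nlinarith [mul_nonneg (sub_nonneg.2 hs2b) (sub_nonneg.2 hdx)]
      exact max_eq_left (le_trans (min_le_right _ _) h1)
  have hFhc' : Fh c' = d - ε * w := by
    simp only [hFh_def]
    have e1 : c + 100 * (1 - ε) * (c' - c) = d - ε * w := by
      rw [hc'_def, hd_def]; ring
    have e2 : d + (100/99) * ε * (c' - d) = d - ε * w := by
      rw [hc'_def, hd_def]; ring
    rw [e1, e2, min_self]
    apply max_eq_right
    rw [hc'_def, hd_def]
    nlinarith [mul_nonneg hw.le (show (0:ℝ) ≤ 99/100 - ε by linarith)]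
  have hFhd : Fh d = d := by
    simp only [hFh_def]
    have e2 : d + (100/99) * ε * (d - d) = d := by ring
    have h1 : d ≤ c + 100 * (1 - ε) * (d - c) := by
      rw [hd_def]
      nlinarith [mul_nonneg hw.le (show (0:ℝ) ≤ 100 * (1 - ε) - 1 by linarith)]
    rw [e2, min_eq_right h1]
    exact max_self d
  have hI := hcorrect Fh hFhcont.continuousOn (hFhmono.strictMonoOn _) hFh0 hFh1 hFhX
    d hd_mem (β c') (hβrange c' hc'_mem)
  rw [hinv c' hc'_mem, hFhc', hFhd] at hI
  -- numeric combination
  have hA0 : 0 ≤ β c' := (hβrange c' hc'_mem).1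
  have hAle : β c' ≤ c' := hno c' hc'_mem
  have hM : β (c'/2) ≤ c'/2 := hno _ hmid_mem
  have hM0 : 0 ≤ β (c'/2) := (hβrange _ hmid_mem).1
  have hc'pos : (0:ℝ) < c' := by linarith
  have h2 : 1/6 - (3/2) * ε ≤ c' - β c' := by
    nlinarith [hIII, hM, hM0, hc'23, hc'pos,
      mul_nonneg (show (0:ℝ) ≤ c'/2 - β (c'/2) by linarith) (show (0:ℝ) ≤ c'/2 by linarith),
      mul_nonneg hε.le (show (0:ℝ) ≤ 3/2 * c' - 1 by linarith),
      mul_nonneg (sub_nonneg.2 hc'23) (show (0:ℝ) ≤ c' by linarith)]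
  have h1 : (c' - β c') * (d - c') ≤ 2 * ε + ε * w := by
    nlinarith [hI, hII,
      mul_nonneg (mul_nonneg hε.le hw.le) (sub_nonneg.2 hd1),
      mul_nonneg (mul_nonneg hε.le hw.le) hA0]
  have hdc : d - c' = (99/100) * w := by rw [hd_def, hc'_def]; ring
  rw [hdc] at h1
  have h3 : (99/100) * w * (1/6 - (3/2) * ε) ≤ 2 * ε + ε * w := by
    nlinarith [h1, mul_le_mul_of_nonneg_right h2 (show (0:ℝ) ≤ (99/100) * w by linarith)]
  have hDwe : D * w * ε = ε := by rw [hDw]; ring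
  have hDe : D * ε = 3 * ε * (k : ℝ) + 3 * ε := by rw [hD_def]; ring
  have h5 := mul_le_mul_of_nonneg_left h3 hD.le
  have h4 : (99/100) * (1/6 - (3/2) * ε) ≤ 6 * ε * ((k:ℝ) + 1) + ε := by
    nlinarith [h5, hDw, hDwe, hDe]
  have hk1 : 1 ≤ (45 * (k:ℝ) + 54) * ε := by nlinarith [h4, hε54]
  have hk2 : 1 / ε ≤ 45 * (k:ℝ) + 54 := by
    rw [div_le_iff₀ hε]; linarith
  linarith
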